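/- arXiv:2508.13063 — 7 statements merged into one kernel-verified Lean document; each statement's English description precedes it below -/
import Mathlib

section
/- Let R be a unital ring, free as a ℤ-module with finite basis B containing the unit 1, with nonnegative integer structure constants N_{x,y}^{z} (so x·y = Σ_z N_{x,y}^z z for x, y ∈ B). Assume there is an involution * : B → B satisfying N_{x,y}^{1} = δ_{y,x*} and Frobenius reciprocity N_{x,y}^{z} = N_{x*,z}^{y} for all x, y, z ∈ B. Let d : R ⊗ ℂ → ℂ be the ℂ-algebra homomorphism induced by a ring homomorphism with d(x*) = d(x) and d(x) ≠ 0 for all x ∈ B, and set D = Σ_{x ∈ B} d(x)² ≠ 0. Then e := (1/D) Σ_{x ∈ B} d(x) x ∈ R ⊗ ℂ satisfies x·e = d(x)·e for all x ∈ B; consequently e is a central idempotent and (R ⊗ ℂ)·e = ℂ·e is one-dimensional, so e is a primitive idempotent. -/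
/-- In the complexification of a based ring with duality `star`, Frobenius reciprocity
and a nonvanishing `*`-invariant character `d`, the element
`e = D⁻¹ Σ_x d(x) x` (with `D = Σ_x d(x)²`) satisfies `x·e = d(x)·e` for every basis
element `x`; consequently `e` is a central idempotent with `(R ⊗ ℂ)·e = ℂ·e`
one-dimensional (so `e` is primitive). -/
theorem stmt_2 {ι : Type*} [Fintype ι] [DecidableEq ι] {R : Type*} [Ring R] [Algebra ℂ R]
    (b : Module.Basis ι ℂ R) (one : ι) (star : ι → ι) (N : ι → ι → ι → ℕ)
    (hone : b one = 1)
    (hmul : ∀ x y : ι, b x * b y = ∑ z : ι, (N x y z : ℂ) • b z)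
    (hstar : Function.Involutive star)
    (hN1 : ∀ x y : ι, N x y one = if y = star x then 1 else 0)
    (hFrob : ∀ x y z : ι, N x y z = N (star x) z y)
    (d : R →ₐ[ℂ] ℂ)
    (hdstar : ∀ x : ι, d (b (star x)) = d (b x))
    (hd0 : ∀ x : ι, d (b x) ≠ 0)
    (hD : (∑ x : ι, (d (b x)) ^ 2) ≠ 0) :
    ∀ e : R, e = (∑ x : ι, (d (b x)) ^ 2)⁻¹ • ∑ x : ι, d (b x) • b x →
      (∀ x : ι, b x * e = d (b x) • e) ∧
      e * e = e ∧
      (∀ r : R, r * e = e * r) ∧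
      (∀ r : R, ∃ c : ℂ, r * e = c • e) := by
  intro e he
  -- the coordinate functional at `one`
  set φ : R →ₗ[ℂ] ℂ := b.coord one with hφ
  have hφone : ∀ u v : ι, φ (b u * b v) = if v = star u then 1 else 0 := by
    intro u v
    rw [hmul, map_sum]
    simp only [map_smul, hφ, Module.Basis.coord_apply, Module.Basis.repr_self, smul_eq_mul,
      Finsupp.single_apply]
    simp only [mul_ite, mul_one, mul_zero, Finset.sum_ite_eq', Finset.mem_univ, if_true]
    rw [hN1 u v]
    split <;> simp
  -- key2 : N a c z = N c (star z) (star a), via associativity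
  have key2 : ∀ a c z : ι, (N a c z : ℂ) = (N c (star z) (star a) : ℂ) := by
    intro a c z
    have h1 : φ (b a * b c * b (star z)) = N a c z := by
      rw [hmul a c, Finset.sum_mul]
      simp only [smul_mul_assoc, map_sum, map_smul, hφone, smul_eq_mul]
      rw [Finset.sum_eq_single z]
      · rw [if_pos rfl, mul_one]
      · intro w _ hw
        rw [if_neg (fun h => hw (hstar.injective h.symm)), mul_zero]
      · intro h; exact absurd (Finset.mem_univ z) h
    have h2 : φ (b a * b c * b (star z)) = N c (star z) (star a) := by
      rw [mul_assoc, hmul c (star z), Finset.mul_sum]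
      simp only [mul_smul_comm, map_sum, map_smul, hφone, smul_eq_mul]
      rw [Finset.sum_eq_single (star a)]
      · rw [if_pos rfl, mul_one]
      · intro w _ hw
        rw [if_neg hw, mul_zero]
      · intro h; exact absurd (Finset.mem_univ (star a)) h
    rw [← h1, h2]
  -- key0 : applying d to hmul
  have key0 : ∀ a c : ι, (∑ y : ι, (N a c y : ℂ) * d (b y)) = d (b a) * d (b c) := by
    intro a c
    have := congrArg d (hmul a c)
    rw [map_mul, map_sum] at this
    simp only [map_smul, smul_eq_mul] at this
    exact this.symm
  -- key1 : ∑_y d(y) N x y z = d(x) d(z)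
  have key1 : ∀ x z : ι, (∑ y : ι, d (b y) * (N x y z : ℂ)) = d (b x) * d (b z) := by
    intro x z
    have := key0 (star x) z
    rw [hdstar] at this
    calc (∑ y : ι, d (b y) * (N x y z : ℂ))
        = ∑ y : ι, (N (star x) z y : ℂ) * d (b y) := by
          refine Finset.sum_congr rfl fun y _ => ?_
          rw [← hFrob, mul_comm]
      _ = d (b x) * d (b z) := this
  -- key3 : ∑_y d(y) N y x z = d(x) d(z)
  have key3 : ∀ x z : ι, (∑ y : ι, d (b y) * (N y x z : ℂ)) = d (b x) * d (b z) := by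
    intro x z
    calc (∑ y : ι, d (b y) * (N y x z : ℂ))
        = ∑ y : ι, d (b y) * (N x (star z) (star y) : ℂ) := by
          refine Finset.sum_congr rfl fun y _ => ?_
          rw [key2 y x z]
      _ = ∑ y : ι, d (b (star y)) * (N x (star z) (star (star y)) : ℂ) :=
          (Fintype.sum_equiv hstar.toPerm _ _ (fun y => rfl)).symm
      _ = ∑ y : ι, (N x (star z) y : ℂ) * d (b y) := by
          refine Finset.sum_congr rfl fun y _ => ?_
          rw [hdstar, hstar y, mul_comm]
      _ = d (b x) * d (b (star z)) := key0 x (star z)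
      _ = d (b x) * d (b z) := by rw [hdstar]
  -- S := ∑ d(y) • b y
  set S : R := ∑ y : ι, d (b y) • b y with hS
  have hmul' : ∀ x : ι, b x * S = d (b x) • S := by
    intro x
    rw [hS, Finset.mul_sum]
    simp only [mul_smul_comm, hmul, Finset.smul_sum, smul_smul]
    rw [Finset.sum_comm]
    refine Finset.sum_congr rfl fun z _ => ?_
    rw [← Finset.sum_smul]
    congr 1
    rw [key1 x z, mul_comm]
  have hmul'' : ∀ x : ι, S * b x = d (b x) • S := by
    intro x
    rw [hS, Finset.sum_mul]
    simp only [smul_mul_assoc, hmul, Finset.smul_sum, smul_smul]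
    rw [Finset.sum_comm]
    refine Finset.sum_congr rfl fun z _ => ?_
    rw [← Finset.sum_smul]
    congr 1
    rw [key3 x z, mul_comm]
  set D : ℂ := ∑ x : ι, (d (b x)) ^ 2 with hDdef
  have hxe : ∀ x : ι, b x * e = d (b x) • e := by
    intro x
    rw [he, mul_smul_comm, hmul' x, smul_comm]
  have hex : ∀ x : ι, e * b x = d (b x) • e := by
    intro x
    rw [he, smul_mul_assoc, hmul'' x, smul_comm]
  have hee : e * e = e := by
    nth_rewrite 1 [he]
    rw [smul_mul_assoc, hS, Finset.sum_mul]
    simp only [smul_mul_assoc, hxe, smul_smul]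
    rw [← Finset.sum_smul, smul_smul]
    have : (∑ y : ι, d (b y) * d (b y)) = D := by
      rw [hDdef]; refine Finset.sum_congr rfl fun y _ => (sq (d (b y))).symm
    rw [this, inv_mul_cancel₀ hD, one_smul]
  have hd : ∀ r : R, d r = ∑ i : ι, b.repr r i * d (b i) := by
    intro r
    conv_lhs => rw [← b.sum_repr r]
    rw [map_sum]
    simp only [map_smul, smul_eq_mul]
  have hre : ∀ r : R, r * e = d r • e := by
    intro r
    conv_lhs => rw [← b.sum_repr r]
    rw [Finset.sum_mul]
    simp only [smul_mul_assoc, hxe, smul_smul]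
    rw [← Finset.sum_smul, ← hd r]
  have her : ∀ r : R, e * r = d r • e := by
    intro r
    conv_lhs => rw [← b.sum_repr r]
    rw [Finset.mul_sum]
    simp only [mul_smul_comm, hex, smul_smul]
    rw [← Finset.sum_smul, ← hd r]
  exact ⟨hxe, hee, fun r => (hre r).trans (her r).symm, fun r => ⟨d r, hre r⟩⟩
end

section
/- Let A ⊆ B ⊆ B' be finite basis sets with 1 ∈ A, where B' is the basis of a based ring R as above, and assume A and B span unital based subrings of R (closed under multiplication and duality). Let d be a *-invariant nonvanishing character, D_A = Σ_{a∈A} d(a)², D_B = Σ_{b∈B} d(b)², and set e_A = (1/D_A) Σ_{a∈A} d(a) a and e_B = (1/D_B) Σ_{b∈B} d(b) b in R ⊗ ℂ. Then e_A · e_B = e_B. -/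
/-- If `A ⊆ B` are sub-bases of a based ring (each containing the unit, closed under
multiplication and duality), and `d` is a `*`-invariant nonvanishing character, then
the corresponding idempotents satisfy `e_A · e_B = e_B`. -/
theorem stmt_3 {ι : Type*} [Fintype ι] [DecidableEq ι] {R : Type*} [Ring R] [Algebra ℂ R]
    (b : Module.Basis ι ℂ R) (one : ι) (star : ι → ι) (N : ι → ι → ι → ℕ)
    (hone : b one = 1)
    (hmul : ∀ x y : ι, b x * b y = ∑ z : ι, (N x y z : ℂ) • b z)
    (hstar : Function.Involutive star)
    (hN1 : ∀ x y : ι, N x y one = if y = star x then 1 else 0)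
    (hFrob : ∀ x y z : ι, N x y z = N (star x) z y)
    (d : R →ₐ[ℂ] ℂ)
    (hdstar : ∀ x : ι, d (b (star x)) = d (b x))
    (hd0 : ∀ x : ι, d (b x) ≠ 0)
    (A B : Finset ι)
    (honeA : one ∈ A) (hAB : A ⊆ B)
    (hAmul : ∀ x ∈ A, ∀ y ∈ A, ∀ z : ι, N x y z ≠ 0 → z ∈ A)
    (hAstar : ∀ x ∈ A, star x ∈ A)
    (hBmul : ∀ x ∈ B, ∀ y ∈ B, ∀ z : ι, N x y z ≠ 0 → z ∈ B)
    (hBstar : ∀ x ∈ B, star x ∈ B)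
    (hDA : (∑ a ∈ A, (d (b a)) ^ 2) ≠ 0)
    (hDB : (∑ a ∈ B, (d (b a)) ^ 2) ≠ 0) :
    ((∑ a ∈ A, (d (b a)) ^ 2)⁻¹ • ∑ a ∈ A, d (b a) • b a) *
      ((∑ a ∈ B, (d (b a)) ^ 2)⁻¹ • ∑ a ∈ B, d (b a) • b a) =
      (∑ a ∈ B, (d (b a)) ^ 2)⁻¹ • ∑ a ∈ B, d (b a) • b a := by

  set S : R := ∑ β ∈ B, d (b β) • b β with hS
  have habs : ∀ x ∈ B, b x * S = d (b x) • S := by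
    intro x hx
    have key : ∀ z : ι, (∑ β ∈ B, d (b β) * (N x β z : ℂ)) =
        if z ∈ B then d (b x) * d (b z) else 0 := by
      intro z
      by_cases hz : z ∈ B
      · simp only [hz, if_true]
        have h1 : d (b (star x)) * d (b z) = ∑ w : ι, (N (star x) z w : ℂ) * d (b w) := by
          rw [← map_mul, hmul]
          simp [Finset.mul_sum, mul_comm]
        have h2 : (∑ w : ι, (N (star x) z w : ℂ) * d (b w)) =
            ∑ w ∈ B, (N (star x) z w : ℂ) * d (b w) := by
          rw [← Finset.sum_subset (Finset.subset_univ B)]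
          intro w _ hw
          have : N (star x) z w = 0 := by
            by_contra h
            exact hw (hBmul _ (hBstar x hx) _ hz _ h)
          simp [this]
        calc (∑ β ∈ B, d (b β) * (N x β z : ℂ))
            = ∑ β ∈ B, (N (star x) z β : ℂ) * d (b β) := by
              refine Finset.sum_congr rfl fun β _ => ?_
              rw [hFrob x β z, mul_comm]
          _ = d (b (star x)) * d (b z) := by rw [← h2, ← h1]
          _ = d (b x) * d (b z) := by rw [hdstar]
      · simp only [hz, if_false]
        refine Finset.sum_eq_zero fun β hβ => ?_
        have : N x β z = 0 := by
          by_contra h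
          exact hz (hBmul _ hx _ hβ _ h)
        simp [this]
    calc b x * S = ∑ β ∈ B, d (b β) • (b x * b β) := by
          rw [hS, Finset.mul_sum]; exact Finset.sum_congr rfl fun β _ => (mul_smul_comm _ _ _)
      _ = ∑ β ∈ B, ∑ z : ι, (d (b β) * (N x β z : ℂ)) • b z := by
          refine Finset.sum_congr rfl fun β _ => ?_
          rw [hmul, Finset.smul_sum]
          exact Finset.sum_congr rfl fun z _ => (smul_smul _ _ _)
      _ = ∑ z : ι, (∑ β ∈ B, d (b β) * (N x β z : ℂ)) • b z := by
          rw [Finset.sum_comm]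
          exact Finset.sum_congr rfl fun z _ => (Finset.sum_smul).symm
      _ = ∑ z : ι, (if z ∈ B then d (b x) * d (b z) else 0) • b z := by
          exact Finset.sum_congr rfl fun z _ => by rw [key]
      _ = ∑ z ∈ B, (d (b x) * d (b z)) • b z := by
          rw [← Finset.sum_subset (Finset.subset_univ B)]
          · exact Finset.sum_congr rfl fun z hz => by simp [hz]
          · intro z _ hz; simp [hz]
      _ = d (b x) • S := by
          rw [hS, Finset.smul_sum]
          exact Finset.sum_congr rfl fun z _ => (smul_smul _ _ _).symm
  have hmain : (∑ a ∈ A, d (b a) • b a) * S = (∑ a ∈ A, (d (b a)) ^ 2) • S := by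
    rw [Finset.sum_mul, Finset.sum_smul]
    refine Finset.sum_congr rfl fun a ha => ?_
    rw [smul_mul_assoc, habs a (hAB ha), smul_smul, sq]
  rw [smul_mul_assoc, mul_smul_comm, hmain, smul_smul, smul_smul,
    mul_comm ((∑ a ∈ A, (d (b a)) ^ 2)⁻¹), mul_assoc, inv_mul_cancel₀ hDA, mul_one]
end

section
/- Let I be a finite index set with a distinguished element 0, and let S be a symmetric invertible complex matrix indexed by I with all S_{0,i} ≠ 0 and satisfying Σ_{m∈I} S_{i,m} S_{m,j*} = Δ·δ_{i,j} for an involution * on I and a nonzero scalar Δ (i.e. S² = Δ·C where C is the permutation matrix of *). Let K be the ℂ-algebra with basis {x_i}_{i∈I} and multiplication given by the Verlinde formula: x_i x_j = Σ_k N_{ij}^k x_k where N_{ij}^k = Σ_m S_{i,m} S_{j,m} S_{m,k*} / (Δ · S_{0,m}) (assumed to define an associative unital algebra with unit x_0). Define e_i := (S_{0,i}/Δ) Σ_j S_{i,j} x_{j*}. Then the e_i are pairwise orthogonal idempotents: e_i e_j = δ_{i,j} e_i, and Σ_{i∈I} e_i = x_0. -/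
/-- In the Verlinde fusion algebra `K` determined by a symmetric invertible matrix `S`
with `S² = Δ·C` (charge conjugation `C`), `S_{0,i} ≠ 0`, the elements
`e_i = (S_{0,i}/Δ) Σ_j S_{i,j} x_{j*}` are pairwise orthogonal idempotents summing
to the unit `x_0`. -/
theorem stmt_4 {I : Type*} [Fintype I] [DecidableEq I] {R : Type*} [Ring R] [Algebra ℂ R]
    (x : Module.Basis I ℂ R) (zero : I) (star : I → I) (S : Matrix I I ℂ) (Δ : ℂ)
    (hsymm : ∀ i j : I, S i j = S j i)
    (hS0 : ∀ i : I, S zero i ≠ 0)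
    (hΔ : Δ ≠ 0)
    (hstar : Function.Involutive star)
    (hsq : ∀ i j : I, (∑ m : I, S i m * S m (star j)) = Δ * (if i = j then 1 else 0))
    (hone : x zero = 1)
    (hmul : ∀ i j : I, x i * x j =
      ∑ k : I, (∑ m : I, S i m * S j m * S m (star k) / (Δ * S zero m)) • x k) :
    (∀ i j : I,
        ((S zero i / Δ) • ∑ l : I, S i l • x (star l)) *
          ((S zero j / Δ) • ∑ l : I, S j l • x (star l)) =
        if i = j then (S zero i / Δ) • ∑ l : I, S i l • x (star l) else 0) ∧
    (∑ i : I, (S zero i / Δ) • ∑ l : I, S i l • x (star l)) = x zero := by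
  have hiff : ∀ a b : I, (a = star b) ↔ (b = star a) :=
    fun a b => ⟨fun h => by rw [h, hstar], fun h => by rw [h, hstar]⟩
  -- `S²` in plain index form : `(S²)_{i k} = Δ · δ_{i, k*}`
  have hsq' : ∀ i k : I, (∑ m : I, S i m * S m k) = Δ * (if i = star k then 1 else 0) := by
    intro i k
    have h := hsq i (star k)
    rwa [hstar k] at h
  -- `S` commutes with charge conjugation : `S_{i*, j} = S_{i, j*}`
  have hcs : ∀ i j : I, S (star i) j = S i (star j) := by
    intro i j
    have h1 : (∑ k : I, S i k * ∑ m : I, S k m * S m j) = Δ * S i (star j) := by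
      simp only [hsq', mul_ite, mul_one, mul_zero, Finset.sum_ite_eq', Finset.mem_univ, if_true]
      ring
    have h2 : (∑ m : I, (∑ k : I, S i k * S k m) * S m j) = Δ * S (star i) j := by
      simp only [hsq', hiff i]
      simp only [ite_mul, mul_ite, one_mul, zero_mul, mul_zero, Finset.sum_ite_eq',
        Finset.mem_univ, if_true]
      ring
    have h3 : (∑ k : I, S i k * ∑ m : I, S k m * S m j)
        = ∑ m : I, (∑ k : I, S i k * S k m) * S m j := by
      simp only [Finset.mul_sum, Finset.sum_mul, mul_assoc]
      exact Finset.sum_comm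
    rw [h3, h2] at h1
    exact mul_left_cancel₀ hΔ h1
  -- the key scalar computation
  have coeff : ∀ i j k : I,
      (∑ l : I, ∑ l' : I, (S i l * S j l') *
        (∑ m : I, S (star l) m * S (star l') m * S m (star k) / (Δ * S zero m)))
      = (if i = j then 1 else 0) * (Δ * S i (star k) / S zero i) := by
    intro i j k
    have step1 : (∑ l : I, ∑ l' : I, (S i l * S j l') *
          (∑ m : I, S (star l) m * S (star l') m * S m (star k) / (Δ * S zero m)))
        = ∑ m : I, ∑ l : I, ∑ l' : I, (S i l * S j l') *
          (S (star l) m * S (star l') m * S m (star k) / (Δ * S zero m)) := by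
      simp only [Finset.mul_sum]
      rw [Finset.sum_congr rfl fun l _ => Finset.sum_comm]
      exact Finset.sum_comm
    have step2 : ∀ m : I, (∑ l : I, ∑ l' : I, (S i l * S j l') *
          (S (star l) m * S (star l') m * S m (star k) / (Δ * S zero m)))
        = (∑ l : I, S i l * S (star l) m) * (∑ l' : I, S j l' * S (star l') m) *
          (S m (star k) / (Δ * S zero m)) := by
      intro m
      rw [Finset.sum_mul_sum, Finset.sum_mul]
      refine Finset.sum_congr rfl fun l _ => ?_
      rw [Finset.sum_mul]
      refine Finset.sum_congr rfl fun l' _ => ?_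
      ring
    have step3 : ∀ a m : I, (∑ l : I, S a l * S (star l) m) = Δ * (if a = m then 1 else 0) := by
      intro a m
      rw [Finset.sum_congr rfl fun l _ => by rw [hcs]]
      exact hsq a m
    rw [step1, Finset.sum_congr rfl fun m _ => step2 m]
    simp only [step3, mul_ite, ite_mul, mul_one, mul_zero, one_mul, zero_mul,
      Finset.sum_ite_eq, Finset.mem_univ, if_true]
    by_cases h : i = j
    · subst h
      simp only [if_pos rfl, one_mul, if_true]
      rw [← mul_div_assoc, div_eq_div_iff (mul_ne_zero hΔ (hS0 i)) (hS0 i)]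
      ring
    · simp [h]
  -- reindexing by the involution
  have reidx : ∀ i : I, (∑ l : I, S i l • x (star l)) = ∑ k : I, S i (star k) • x k := by
    intro i
    exact (Fintype.sum_equiv (hstar.toPerm) _ _
      (fun k => by simp [Function.Involutive.coe_toPerm, hstar k])).symm
  -- canonical expansion of the product e_i * e_j
  have expand : ∀ i j : I,
      ((S zero i / Δ) • ∑ l : I, S i l • x (star l)) *
        ((S zero j / Δ) • ∑ l : I, S j l • x (star l))
      = ∑ k : I, ((S zero i / Δ) * (S zero j / Δ) *
          (∑ l : I, ∑ l' : I, (S i l * S j l') *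
            (∑ m : I, S (star l) m * S (star l') m * S m (star k) / (Δ * S zero m)))) • x k := by
    intro i j
    rw [smul_mul_smul_comm, Finset.sum_mul_sum]
    have hterm : ∀ l l' : I, (S i l • x (star l)) * (S j l' • x (star l'))
        = ∑ k : I, ((S i l * S j l') *
            (∑ m : I, S (star l) m * S (star l') m * S m (star k) / (Δ * S zero m))) • x k := by
      intro l l'
      rw [smul_mul_smul_comm, hmul, Finset.smul_sum]
      simp only [smul_smul]
    rw [Finset.sum_congr rfl fun l _ => Finset.sum_congr rfl fun l' _ => hterm l l']
    rw [Finset.sum_congr rfl fun l _ => Finset.sum_comm, Finset.sum_comm, Finset.smul_sum]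
    refine Finset.sum_congr rfl fun k _ => ?_
    simp only [← Finset.sum_smul]
    rw [smul_smul]
  constructor
  · intro i j
    rw [expand i j]
    by_cases h : i = j
    · subst h
      rw [if_pos rfl, reidx i, Finset.smul_sum]
      refine Finset.sum_congr rfl fun k _ => ?_
      rw [coeff i i k, if_pos rfl, smul_smul]
      congr 1
      rw [one_mul, div_mul_div_comm, div_mul_div_comm, div_mul_eq_mul_div,
        div_eq_div_iff (mul_ne_zero (mul_ne_zero hΔ hΔ) (hS0 i)) hΔ]
      ring
    · rw [if_neg h]
      refine Finset.sum_eq_zero fun k _ => ?_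
      rw [coeff i j k, if_neg h, zero_mul, mul_zero, zero_smul]
  · have hc : ∀ l : I, (∑ i : I, S zero i / Δ * S i l)
        = if l = star zero then 1 else 0 := by
      intro l
      rw [Finset.sum_congr rfl fun i _ => div_mul_eq_mul_div (S zero i) Δ (S i l),
        ← Finset.sum_div, hsq' zero l]
      simp only [hiff zero]
      rw [mul_comm, mul_div_assoc, div_self hΔ, mul_one]
    calc (∑ i : I, (S zero i / Δ) • ∑ l : I, S i l • x (star l))
        = ∑ i : I, ∑ l : I, (S zero i / Δ * S i l) • x (star l) := by
          refine Finset.sum_congr rfl fun i _ => ?_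
          rw [Finset.smul_sum]
          simp only [smul_smul]
      _ = ∑ l : I, (∑ i : I, S zero i / Δ * S i l) • x (star l) := by
          rw [Finset.sum_comm]
          exact Finset.sum_congr rfl fun l _ => (Finset.sum_smul).symm
      _ = x zero := by
          simp only [hc, ite_smul, one_smul, zero_smul, Finset.sum_ite_eq',
            Finset.mem_univ, if_true, hstar zero]
end

section
/- With S, I, K as in the Verlinde setting, for each fixed w ∈ I the linear map χ_w : K → ℂ determined on basis elements by χ_w(x_i) = S_{i,w}/S_{0,w} is a ℂ-algebra homomorphism (χ_w(x_0) = 1 and χ_w(x_i x_j) = χ_w(x_i) χ_w(x_j)). -/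
/-- In the Verlinde fusion algebra determined by `S`, for each fixed `w` the linear
functional `χ_w` with `χ_w(x_i) = S_{i,w}/S_{0,w}` is a ℂ-algebra homomorphism:
`χ_w(1) = 1` and `χ_w(a·b) = χ_w(a)·χ_w(b)`. -/
theorem stmt_5 {I : Type*} [Fintype I] [DecidableEq I] {R : Type*} [Ring R] [Algebra ℂ R]
    (x : Module.Basis I ℂ R) (zero : I) (star : I → I) (S : Matrix I I ℂ) (Δ : ℂ)
    (hsymm : ∀ i j : I, S i j = S j i)
    (hS0 : ∀ i : I, S zero i ≠ 0)
    (hΔ : Δ ≠ 0)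
    (hstar : Function.Involutive star)
    (hsq : ∀ i j : I, (∑ m : I, S i m * S m (star j)) = Δ * (if i = j then 1 else 0))
    (hone : x zero = 1)
    (hmul : ∀ i j : I, x i * x j =
      ∑ k : I, (∑ m : I, S i m * S j m * S m (star k) / (Δ * S zero m)) • x k)
    (w : I) (χ : R →ₗ[ℂ] ℂ)
    (hχ : ∀ i : I, χ (x i) = S i w / S zero w) :
    χ 1 = 1 ∧ ∀ a b : R, χ (a * b) = χ a * χ b := by
  -- S commutes with the "charge conjugation" permutation
  have h0 : ∀ a b : I, S a b = S (star a) (star b) := by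
    intro a b
    have h1 : ∑ m : I, S a m * (∑ k : I, S m k * S k (star b)) =
        ∑ k : I, (∑ m : I, S a m * S m k) * S k (star b) := by
      simp_rw [Finset.mul_sum, Finset.sum_mul]
      rw [Finset.sum_comm]
      simp_rw [mul_assoc]
    have h2 : ∑ m : I, S a m * (∑ k : I, S m k * S k (star b)) = Δ * S a b := by
      have : ∀ m : I, (∑ k : I, S m k * S k (star b)) = Δ * (if m = b then 1 else 0) :=
        fun m => hsq m b
      simp only [this, mul_ite, mul_one, mul_zero, Finset.sum_ite_eq',
        Finset.mem_univ, if_true]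
      ring
    have h3 : ∑ k : I, (∑ m : I, S a m * S m k) * S k (star b) =
        Δ * S (star a) (star b) := by
      have inner : ∀ k : I, (∑ m : I, S a m * S m k) = Δ * (if star a = k then 1 else 0) := by
        intro k
        have := hsq a (star k)
        rw [hstar k] at this
        rw [this]
        congr 1
        by_cases h : a = star k
        · simp [h, hstar k]
        · have h' : ¬ star a = k := fun hk => h (by rw [← hk, hstar a])
          simp [h, h']
      simp only [inner, ite_mul, one_mul, zero_mul, mul_ite, mul_zero,
        Finset.sum_ite_eq, Finset.sum_ite_eq', Finset.mem_univ, if_true]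
      ring
    have := h1
    rw [h2, h3] at this
    exact mul_left_cancel₀ hΔ this
  have hC : ∀ a b : I, S (star a) b = S a (star b) := by
    intro a b
    have := h0 (star a) b
    rw [hstar a] at this
    exact this
  -- the key orthogonality sum
  have hsum : ∀ m : I, (∑ k : I, S m (star k) * S k w) = Δ * (if m = w then 1 else 0) := by
    intro m
    have := hsq (star m) (star w)
    rw [hstar w] at this
    simp_rw [hC] at this
    rw [this]
    congr 1
    by_cases h : m = w
    · simp [h]
    · have h' : ¬ star m = star w := fun hk => h (hstar.injective hk)
      simp [h, h']
  -- multiplicativity on basis vectors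
  have key : ∀ i j : I, χ (x i * x j) = χ (x i) * χ (x j) := by
    intro i j
    rw [hmul, map_sum]
    simp_rw [map_smul, hχ, smul_eq_mul, Finset.sum_mul]
    rw [Finset.sum_comm]
    have step : ∀ m : I, (∑ k : I, S i m * S j m * S m (star k) / (Δ * S zero m) *
        (S k w / S zero w)) =
        S i m * S j m / (Δ * S zero m * S zero w) * (Δ * (if m = w then 1 else 0)) := by
      intro m
      rw [← hsum m, Finset.mul_sum]
      apply Finset.sum_congr rfl
      intro k _
      field_simp
    simp only [step, mul_ite, mul_one, mul_zero, Finset.sum_ite_eq, Finset.sum_ite_eq',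
      Finset.mem_univ, if_true]
    have hw := hS0 w
    rw [div_mul_div_comm, div_mul_eq_mul_div, div_eq_div_iff
      (mul_ne_zero (mul_ne_zero hΔ hw) hw) (mul_ne_zero hw hw)]
    ring
  constructor
  · rw [← hone, hχ, div_self (hS0 w)]
  · have hgen : ∀ (f g : I → ℂ),
        χ ((∑ i : I, f i • x i) * (∑ j : I, g j • x j)) =
          χ (∑ i : I, f i • x i) * χ (∑ j : I, g j • x j) := by
      intro f g
      rw [Finset.sum_mul_sum]
      simp_rw [map_sum, map_smul, smul_eq_mul, Finset.sum_mul_sum, smul_mul_assoc,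
        mul_smul_comm, map_smul, smul_eq_mul, key]
      apply Finset.sum_congr rfl
      intro i _
      apply Finset.sum_congr rfl
      intro j _
      ring
    intro a b
    have := hgen (x.repr a) (x.repr b)
    rwa [x.sum_repr a, x.sum_repr b] at this
end

section
/- Let R be a based ring with finite basis B, duality *, Frobenius reciprocity, and a character d with d(x) > 0 and d(x*) = d(x) as above. Suppose R is graded by a finite group G: B = ⊔_{g∈G} B_g with 1 ∈ B_1, x·y supported on B_{gh} for x ∈ B_g, y ∈ B_h, and x* ∈ B_{g⁻¹} for x ∈ B_g. Let J ⊆ R ⊗ ℂ be the two-sided ideal generated by {x − d(x)·1 : x ∈ B_1}, and let K̄ = (R ⊗ ℂ)/J. Then for every g ∈ G and every X ∈ B_g, the image of X/d(X) in K̄ is invertible with inverse the image of X*/d(X), and for any two X, Y ∈ B_g the images of X/d(X) and Y/d(Y) in K̄ are equal. -/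
/-- Let `R` be a `G`-graded based ring with duality `star`, Frobenius reciprocity and a
positive `*`-invariant character `d`; let `J` be the two-sided ideal of `R ⊗ ℂ`
generated by `{x − d(x)·1 : x ∈ B_1}` and `K̄ = (R ⊗ ℂ)/J`.  For every `g ∈ G` and
`X ∈ B_g`, the image of `X/d(X)` in `K̄` is invertible with inverse the image of
`X*/d(X)`, and for `X, Y ∈ B_g` the images of `X/d(X)` and `Y/d(Y)` agree
(expressed via membership in `J`). -/
theorem stmt_6 {G : Type*} [Group G] [Fintype G]
    {ι : Type*} [Fintype ι] [DecidableEq ι] {R : Type*} [Ring R] [Algebra ℂ R]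
    (b : Module.Basis ι ℂ R) (one : ι) (star : ι → ι) (N : ι → ι → ι → ℕ) (deg : ι → G)
    (hone : b one = 1) (hdegone : deg one = 1)
    (hmul : ∀ x y : ι, b x * b y = ∑ z : ι, (N x y z : ℂ) • b z)
    (hgrade : ∀ x y z : ι, N x y z ≠ 0 → deg z = deg x * deg y)
    (hstar : Function.Involutive star)
    (hdegstar : ∀ x : ι, deg (star x) = (deg x)⁻¹)
    (hN1 : ∀ x y : ι, N x y one = if y = star x then 1 else 0)
    (hFrob : ∀ x y z : ι, N x y z = N (star x) z y)
    (d : R →ₐ[ℂ] ℂ)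
    (hdstar : ∀ x : ι, d (b (star x)) = d (b x))
    (hdpos : ∀ x : ι, ∃ r : ℝ, 0 < r ∧ d (b x) = r) :
    ∀ J : TwoSidedIdeal R,
      J = TwoSidedIdeal.span {r : R | ∃ x : ι, deg x = 1 ∧ r = b x - d (b x) • 1} →
      ∀ X Y : ι, deg X = deg Y →
        (((d (b X))⁻¹ • b X) * ((d (b X))⁻¹ • b (star X)) - 1 ∈ J) ∧
        (((d (b X))⁻¹ • b (star X)) * ((d (b X))⁻¹ • b X) - 1 ∈ J) ∧
        ((d (b X))⁻¹ • b X - (d (b Y))⁻¹ • b Y ∈ J) := by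
  intro J hJ X Y hdeg
  -- nonvanishing of d on basis elements
  have hne : ∀ x : ι, d (b x) ≠ 0 := by
    intro x
    obtain ⟨r, hr, hrd⟩ := hdpos x
    rw [hrd]
    exact Complex.ofReal_ne_zero.mpr hr.ne'
  -- generators are in J
  have hgen : ∀ z : ι, deg z = 1 → b z - d (b z) • 1 ∈ J := by
    intro z hz
    rw [hJ]
    exact TwoSidedIdeal.subset_span ⟨z, hz, rfl⟩
  -- J is closed under scalar multiplication
  have hsmul : ∀ (c : ℂ) (u : R), u ∈ J → c • u ∈ J := by
    intro c u hu
    rw [Algebra.smul_def]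
    exact J.mul_mem_left _ _ hu
  -- key lemma: products landing in degree 1
  have hL2 : ∀ x y : ι, deg x * deg y = 1 →
      b x * b y - (d (b x) * d (b y)) • 1 ∈ J := by
    intro x y hxy
    have hd : d (b x) * d (b y) = ∑ z : ι, (N x y z : ℂ) * d (b z) := by
      rw [← map_mul, hmul, map_sum]
      simp [smul_eq_mul]
    have key : b x * b y - (d (b x) * d (b y)) • 1
        = ∑ z : ι, (N x y z : ℂ) • (b z - d (b z) • 1) := by
      rw [hmul, hd, Finset.sum_smul, ← Finset.sum_sub_distrib]
      congr 1
      funext z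
      rw [smul_sub, smul_smul]
    rw [key]
    apply sum_mem
    intro z _
    by_cases h : N x y z = 0
    · simpa [h] using J.zero_mem
    · exact hsmul _ _ (hgen z (by rw [hgrade x y z h, hxy]))
  refine ⟨?_, ?_, ?_⟩
  · -- X/d(X) * X*/d(X) ≡ 1
    have key := hL2 X (star X) (by rw [hdegstar, mul_inv_cancel])
    rw [hdstar] at key
    have h2 := hsmul ((d (b X))⁻¹ * (d (b X))⁻¹) _ key
    have heq : ((d (b X))⁻¹ • b X) * ((d (b X))⁻¹ • b (star X)) - 1
        = ((d (b X))⁻¹ * (d (b X))⁻¹) •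
            (b X * b (star X) - (d (b X) * d (b X)) • 1) := by
      rw [smul_sub, smul_smul, smul_mul_smul]
      have : ((d (b X))⁻¹ * (d (b X))⁻¹) * (d (b X) * d (b X)) = 1 := by
        rw [mul_mul_mul_comm, inv_mul_cancel₀ (hne X), one_mul]
      rw [this, one_smul]
    rw [heq]
    exact h2
  · -- X*/d(X) * X/d(X) ≡ 1
    have key := hL2 (star X) X (by rw [hdegstar, inv_mul_cancel])
    rw [hdstar] at key
    have h2 := hsmul ((d (b X))⁻¹ * (d (b X))⁻¹) _ key
    have heq : ((d (b X))⁻¹ • b (star X)) * ((d (b X))⁻¹ • b X) - 1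
        = ((d (b X))⁻¹ * (d (b X))⁻¹) •
            (b (star X) * b X - (d (b X) * d (b X)) • 1) := by
      rw [smul_sub, smul_smul, smul_mul_smul]
      have : ((d (b X))⁻¹ * (d (b X))⁻¹) * (d (b X) * d (b X)) = 1 := by
        rw [mul_mul_mul_comm, inv_mul_cancel₀ (hne X), one_mul]
      rw [this, one_smul]
    rw [heq]
    exact h2
  · -- X/d(X) ≡ Y/d(Y)
    set cX := d (b X) with hcX
    set cY := d (b Y) with hcY
    have hX := hne X
    have hY := hne Y
    have E1 := hL2 (star Y) Y (by rw [hdegstar, inv_mul_cancel])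
    rw [hdstar] at E1
    have E2 := hL2 X (star Y) (by rw [hdegstar, hdeg, mul_inv_cancel])
    rw [hdstar] at E2
    have h1 : b X * (b (star Y) * b Y - (cY * cY) • 1) ∈ J :=
      J.mul_mem_left _ _ E1
    have h2 : (b X * b (star Y) - (cX * cY) • 1) * b Y ∈ J :=
      J.mul_mem_right _ _ E2
    have h3 := hsmul (cX⁻¹ * cY⁻¹ * cY⁻¹) _ (J.sub_mem h2 h1)
    have heq : cX⁻¹ • b X - cY⁻¹ • b Y
        = (cX⁻¹ * cY⁻¹ * cY⁻¹) •
            ((b X * b (star Y) - (cX * cY) • 1) * b Y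
              - b X * (b (star Y) * b Y - (cY * cY) • 1)) := by
      simp only [sub_mul, mul_sub, smul_mul_assoc, mul_smul_comm, one_mul, mul_one,
        smul_sub, smul_smul, mul_assoc]
      match_scalars <;> field_simp [show cX ≠ 0 from hX, show cY ≠ 0 from hY] <;> ring
    rw [heq]
    exact h3
end

section
/- In the setting of the previous statement, assume additionally that B_g ≠ ∅ for every g ∈ G. For each g pick X_g ∈ B_g and let ḡ denote the image of X_g/d(X_g) in K̄ = (R ⊗ ℂ)/J. Then the map G → K̄, g ↦ ḡ, is well defined (independent of the choice of X_g), satisfies ḡ·h̄ = (gh)‾ and 1̄ = 1, and extends to a surjective ℂ-algebra homomorphism ℂ[G] → K̄; if moreover dim_ℂ K̄ = |G|, this map is an isomorphism of ℂ-algebras ℂ[G] ≅ K̄. -/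
/-- In the `G`-graded based ring setting with nonempty graded pieces, choosing
`X_g ∈ B_g` and setting `ḡ = q(X_g/d(X_g))` in `K̄ = (R ⊗ ℂ)/J` gives a well-defined
map (independent of the choices), satisfying `ḡ·h̄ = (gh)‾` and `1̄ = 1`, which extends
to a surjective ℂ-algebra homomorphism `ℂ[G] → K̄`; if `dim K̄ = |G|` it is an
isomorphism. -/
theorem stmt_7 {G : Type*} [Group G] [Fintype G]
    {ι : Type*} [Fintype ι] [DecidableEq ι] {R : Type*} [Ring R] [Algebra ℂ R]
    (b : Module.Basis ι ℂ R) (one : ι) (star : ι → ι) (N : ι → ι → ι → ℕ) (deg : ι → G)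
    (hone : b one = 1) (hdegone : deg one = 1)
    (hmul : ∀ x y : ι, b x * b y = ∑ z : ι, (N x y z : ℂ) • b z)
    (hgrade : ∀ x y z : ι, N x y z ≠ 0 → deg z = deg x * deg y)
    (hstar : Function.Involutive star)
    (hdegstar : ∀ x : ι, deg (star x) = (deg x)⁻¹)
    (hN1 : ∀ x y : ι, N x y one = if y = star x then 1 else 0)
    (hFrob : ∀ x y z : ι, N x y z = N (star x) z y)
    (d : R →ₐ[ℂ] ℂ)
    (hdstar : ∀ x : ι, d (b (star x)) = d (b x))
    (hdpos : ∀ x : ι, ∃ r : ℝ, 0 < r ∧ d (b x) = r)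
    -- every graded piece is nonempty, with a chosen representative `sel g ∈ B_g`
    (sel : G → ι) (hsel : ∀ g : G, deg (sel g) = g)
    -- `K̄` is the quotient of `R` by the two-sided ideal `J`
    (Kbar : Type*) [Ring Kbar] [Algebra ℂ Kbar]
    (q : R →ₐ[ℂ] Kbar) (hq : Function.Surjective q)
    (hker : ∀ r : R, q r = 0 ↔
      r ∈ TwoSidedIdeal.span {r : R | ∃ x : ι, deg x = 1 ∧ r = b x - d (b x) • 1}) :
    -- well-definedness: the image depends only on the degree
    (∀ (g : G) (x : ι), deg x = g →
        q ((d (b x))⁻¹ • b x) = q ((d (b (sel g)))⁻¹ • b (sel g))) ∧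
    -- group law
    (∀ g h : G, q ((d (b (sel g)))⁻¹ • b (sel g)) * q ((d (b (sel h)))⁻¹ • b (sel h)) =
        q ((d (b (sel (g * h))))⁻¹ • b (sel (g * h)))) ∧
    q ((d (b (sel 1)))⁻¹ • b (sel 1)) = 1 ∧
    -- extension to a surjective algebra homomorphism from the group algebra
    ∃ φ : MonoidAlgebra ℂ G →ₐ[ℂ] Kbar,
      (∀ g : G, φ (MonoidAlgebra.of ℂ G g) = q ((d (b (sel g)))⁻¹ • b (sel g))) ∧
      Function.Surjective φ ∧
      (Module.finrank ℂ Kbar = Fintype.card G → Function.Bijective φ) := by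
  -- nonvanishing of d on the basis
  have hdne : ∀ x : ι, d (b x) ≠ 0 := by
    intro x
    obtain ⟨r, hr, heq⟩ := hdpos x
    rw [heq]
    exact_mod_cast Complex.ofReal_ne_zero.mpr hr.ne'
  set u : ι → Kbar := fun x => q ((d (b x))⁻¹ • b x) with hu
  -- degree-1 basis elements map to scalars
  have hA : ∀ x : ι, deg x = 1 → q (b x) = d (b x) • (1 : Kbar) := by
    intro x hx
    have h0 : q (b x - d (b x) • 1) = 0 :=
      (hker _).mpr (TwoSidedIdeal.subset_span ⟨x, hx, rfl⟩)
    rw [map_sub, map_smul, map_one, sub_eq_zero] at h0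
    exact h0
  -- key computation
  have hB : ∀ x y : ι, deg x = deg y →
      q (b (star x)) * q (b y) = (d (b (star x)) * d (b y)) • (1 : Kbar) := by
    intro x y hxy
    have hterm : ∀ z : ι, (N (star x) y z : ℂ) • q (b z)
        = ((N (star x) y z : ℂ) * d (b z)) • (1 : Kbar) := by
      intro z
      by_cases hz : N (star x) y z = 0
      · simp [hz]
      · rw [hA z, smul_smul]
        rw [hgrade _ _ _ hz, hdegstar, hxy, inv_mul_cancel]
    calc q (b (star x)) * q (b y) = q (b (star x) * b y) := (map_mul q _ _).symm
      _ = ∑ z : ι, (N (star x) y z : ℂ) • q (b z) := by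
          rw [hmul, map_sum]; simp only [map_smul]
      _ = (∑ z : ι, (N (star x) y z : ℂ) * d (b z)) • (1 : Kbar) := by
          rw [Finset.sum_smul]; exact Finset.sum_congr rfl fun z _ => hterm z
      _ = (d (b (star x) * b y)) • (1 : Kbar) := by
          rw [hmul, map_sum]; simp only [map_smul, smul_eq_mul]
      _ = (d (b (star x)) * d (b y)) • (1 : Kbar) := by rw [map_mul]
  -- inverse relation
  have hri : ∀ x y : ι, deg x = deg y → u (star x) * u y = 1 := by
    intro x y hxy
    simp only [hu, map_smul]
    rw [smul_mul_assoc, mul_smul_comm, hB x y hxy, smul_smul, smul_smul,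
      mul_mul_mul_comm, inv_mul_cancel₀ (hdne _), inv_mul_cancel₀ (hdne _), one_mul, one_smul]
  have hli : ∀ x : ι, u x * u (star x) = 1 := by
    intro x
    have := hri (star x) (star x) rfl
    rwa [hstar x] at this
  -- well-definedness
  have hwd : ∀ (g : G) (x : ι), deg x = g → u x = u (sel g) := by
    intro g x hx
    have h2 : u (star x) * u (sel g) = 1 := hri x (sel g) (by rw [hx, hsel])
    calc u x = u x * (u (star x) * u (sel g)) := by rw [h2, mul_one]
      _ = (u x * u (star x)) * u (sel g) := by rw [mul_assoc]
      _ = u (sel g) := by rw [hli, one_mul]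
  -- q (b z) in terms of u
  have hqb : ∀ z : ι, q (b z) = d (b z) • u (sel (deg z)) := by
    intro z
    rw [← hwd (deg z) z rfl, hu]
    simp only [map_smul, smul_smul]
    rw [mul_inv_cancel₀ (hdne z), one_smul]
  -- group law
  have hgl : ∀ g h : G, u (sel g) * u (sel h) = u (sel (g * h)) := by
    intro g h
    have hterm : ∀ z : ι, (N (sel g) (sel h) z : ℂ) • q (b z)
        = ((N (sel g) (sel h) z : ℂ) * d (b z)) • u (sel (g * h)) := by
      intro z
      by_cases hz : N (sel g) (sel h) z = 0
      · simp [hz]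
      · rw [hqb z, smul_smul, hgrade _ _ _ hz, hsel, hsel]
    have key : q (b (sel g) * b (sel h)) = (d (b (sel g)) * d (b (sel h))) • u (sel (g * h)) := by
      calc q (b (sel g) * b (sel h))
          = ∑ z : ι, (N (sel g) (sel h) z : ℂ) • q (b z) := by
            rw [hmul, map_sum]; simp only [map_smul]
        _ = (∑ z : ι, (N (sel g) (sel h) z : ℂ) * d (b z)) • u (sel (g * h)) := by
            rw [Finset.sum_smul]; exact Finset.sum_congr rfl fun z _ => hterm z
        _ = (d (b (sel g) * b (sel h))) • u (sel (g * h)) := by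
            rw [hmul, map_sum]; simp only [map_smul, smul_eq_mul]
        _ = (d (b (sel g)) * d (b (sel h))) • u (sel (g * h)) := by rw [map_mul]
    show q ((d (b (sel g)))⁻¹ • b (sel g)) * q ((d (b (sel h)))⁻¹ • b (sel h)) = _
    rw [map_smul, map_smul, smul_mul_assoc, mul_smul_comm, ← map_mul, key, smul_smul, smul_smul,
      mul_mul_mul_comm, inv_mul_cancel₀ (hdne _), inv_mul_cancel₀ (hdne _), one_mul, one_smul]
  -- unit
  have hone1 : u (sel 1) = 1 := by
    rw [hu]
    simp only [map_smul]
    rw [hA (sel 1) (hsel 1), smul_smul, inv_mul_cancel₀ (hdne _), one_smul]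
  refine ⟨fun g x hx => hwd g x hx, hgl, hone1, ?_⟩
  -- the algebra homomorphism
  set f : G →* Kbar :=
    { toFun := fun g => u (sel g)
      map_one' := hone1
      map_mul' := fun g h => (hgl g h).symm } with hf
  set φ : MonoidAlgebra ℂ G →ₐ[ℂ] Kbar := MonoidAlgebra.lift ℂ Kbar G f with hφ
  have hφof : ∀ g : G, φ (MonoidAlgebra.of ℂ G g) = u (sel g) := by
    intro g; rw [hφ, MonoidAlgebra.lift_of]; rfl
  have hrange : ∀ r : R, q r ∈ φ.range := by
    intro r
    rw [← b.sum_repr r, map_sum]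
    refine Subalgebra.sum_mem _ fun x _ => ?_
    rw [map_smul]
    refine Subalgebra.smul_mem _ ?_ _
    rw [hqb x]
    exact Subalgebra.smul_mem _ ((AlgHom.mem_range φ).mpr ⟨MonoidAlgebra.of ℂ G (deg x), hφof _⟩) _
  have hsurj : Function.Surjective φ := by
    intro k
    obtain ⟨r, rfl⟩ := hq k
    exact hrange r
  refine ⟨φ, hφof, hsurj, ?_⟩
  intro hdim
  have hfin1 : FiniteDimensional ℂ (MonoidAlgebra ℂ G) := by
    exact Module.Finite.equiv (MonoidAlgebra.coeffLinearEquiv ℂ (S := ℂ) (M := G)).symm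
  have hfinR : FiniteDimensional ℂ R := Module.Finite.of_basis b
  have hfin2 : FiniteDimensional ℂ Kbar :=
    Module.Finite.of_surjective q.toLinearMap hq
  have hrk : Module.finrank ℂ (MonoidAlgebra ℂ G) = Module.finrank ℂ Kbar := by
    rw [hdim]
    rw [(MonoidAlgebra.coeffLinearEquiv ℂ (S := ℂ) (M := G)).finrank_eq]; simp
  exact ⟨(LinearMap.injective_iff_surjective_of_finrank_eq_finrank (f := φ.toLinearMap)
    hrk).mpr hsurj, hsurj⟩
end

section
/- Fix n ≥ 1, let m = 2n+1, and let D = D_{2m} be the dihedral group of order 2m with cyclic subgroup H = ⟨τ⟩ of order m. Define R to be the free ℤ-module with basis D ∪ {X, Y} and bilinear multiplication determined by: group multiplication on D; h·X = X·h = X and h·Y = Y·h = Y for h ∈ H; g·X = X·g = Y and g·Y = Y·g = X for g ∈ D∖H; X² = Y² = Σ_{h∈H} h; and X·Y = Y·X = Σ_{g∈D∖H} g. Then R is an associative unital ring with unit the identity element of D. -/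
open DihedralGroup Finsupp

namespace Stmt13
variable (m : ℕ) [NeZero m]
abbrev Gen := DihedralGroup m ⊕ Bool
noncomputable def base : Gen m → Gen m → (Gen m →₀ ℤ)
  | .inl g, .inl h => Finsupp.single (.inl (g * h)) 1
  | .inl (.r _), .inr c => Finsupp.single (.inr c) 1
  | .inl (.sr _), .inr c => Finsupp.single (.inr (!c)) 1
  | .inr c, .inl (.r _) => Finsupp.single (.inr c) 1
  | .inr c, .inl (.sr _) => Finsupp.single (.inr (!c)) 1
  | .inr c, .inr c' =>
    if c = c' then ∑ i : ZMod m, Finsupp.single (.inl (.r i)) 1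
    else ∑ i : ZMod m, Finsupp.single (.inl (.sr i)) 1

noncomputable def mulL : (Gen m →₀ ℤ) →ₗ[ℤ] (Gen m →₀ ℤ) →ₗ[ℤ] (Gen m →₀ ℤ) :=
  Finsupp.lsum ℤ fun x => LinearMap.toSpanSingleton ℤ _
    (Finsupp.lsum ℤ fun y => LinearMap.toSpanSingleton ℤ _ (base m x y))

lemma mulL_single_single (x y : Gen m) (a b : ℤ) :
    mulL m (Finsupp.single x a) (Finsupp.single y b) = (a * b) • base m x y := by
  simp [mulL, LinearMap.toSpanSingleton_apply, LinearMap.smul_apply, smul_smul, mul_comm]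

lemma mulL_single_one (x y : Gen m) :
    mulL m (Finsupp.single x 1) (Finsupp.single y 1) = base m x y := by
  simp [mulL_single_single]

lemma base_assoc (x y z : Gen m) :
    mulL m (base m x y) (Finsupp.single z 1) = mulL m (Finsupp.single x 1) (base m y z) := by
  rcases x with (a | a) | c <;> rcases y with (b | b) | d <;> rcases z with (j | j) | e <;>
    (try cases c) <;> (try cases d) <;> (try cases e) <;>
    simp [base, mulL_single_one, mul_assoc, map_sum, LinearMap.coe_sum, Finset.sum_apply] <;>
    first
      | rfl
      | exact congrArg (fun t => Finsupp.single (Sum.inl (DihedralGroup.r t) : Gen m) (1:ℤ)) (by ring)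
      | exact congrArg (fun t => Finsupp.single (Sum.inl (DihedralGroup.sr t) : Gen m) (1:ℤ)) (by ring)
      | exact Fintype.sum_bijective _ (Equiv.addLeft a).bijective _ _ fun i => rfl
      | exact (Fintype.sum_bijective _ (Equiv.addLeft a).bijective _ _ fun i => rfl).symm
      | exact Fintype.sum_bijective _ (Equiv.addRight j).bijective _ _ fun i => rfl
      | exact (Fintype.sum_bijective _ (Equiv.addRight j).bijective _ _ fun i => rfl).symm
      | exact Fintype.sum_bijective _ (Equiv.subLeft j).bijective _ _ fun i => rfl
      | exact (Fintype.sum_bijective _ (Equiv.subLeft j).bijective _ _ fun i => rfl).symm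
      | exact Fintype.sum_bijective _ (Equiv.subRight a).bijective _ _ fun i => rfl
      | exact (Fintype.sum_bijective _ (Equiv.subRight a).bijective _ _ fun i => rfl).symm

lemma mulL_assoc (a b c : Gen m →₀ ℤ) :
    mulL m (mulL m a b) c = mulL m a (mulL m b c) := by
  induction a using Finsupp.induction_linear with
  | zero => simp
  | add f g hf hg => simp [map_add, LinearMap.add_apply, hf, hg]
  | single x mx =>
    induction b using Finsupp.induction_linear with
    | zero => simp
    | add f g hf hg => simp [map_add, LinearMap.add_apply, hf, hg]
    | single y my =>
      induction c using Finsupp.induction_linear with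
      | zero => simp
      | add f g hf hg => simp [map_add, hf, hg]
      | single z mz =>
        have h1 : (Finsupp.single x mx : Gen m →₀ ℤ) = mx • Finsupp.single x 1 := by
          simp [Finsupp.smul_single]
        have h2 : (Finsupp.single y my : Gen m →₀ ℤ) = my • Finsupp.single y 1 := by
          simp [Finsupp.smul_single]
        have h3 : (Finsupp.single z mz : Gen m →₀ ℤ) = mz • Finsupp.single z 1 := by
          simp [Finsupp.smul_single]
        rw [h1, h2, h3]
        simp only [map_smul, LinearMap.smul_apply, map_smul]
        rw [mulL_single_one, base_assoc, mulL_single_one]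

lemma base_one_left (y : Gen m) : base m (Sum.inl 1) y = Finsupp.single y 1 := by
  rw [show (1 : DihedralGroup m) = DihedralGroup.r 0 from rfl]
  rcases y with (b | b) | d <;> simp [base]

lemma base_one_right (y : Gen m) : base m y (Sum.inl 1) = Finsupp.single y 1 := by
  rw [show (1 : DihedralGroup m) = DihedralGroup.r 0 from rfl]
  rcases y with (b | b) | d <;> simp [base]

lemma mulL_one_left (a : Gen m →₀ ℤ) : mulL m (Finsupp.single (Sum.inl 1) 1) a = a := by
  induction a using Finsupp.induction_linear with
  | zero => simp
  | add f g hf hg => simp [map_add, hf, hg]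
  | single y c => rw [mulL_single_single]; simp [base_one_left, Finsupp.smul_single]

lemma mulL_one_right (a : Gen m →₀ ℤ) : mulL m a (Finsupp.single (Sum.inl 1) 1) = a := by
  induction a using Finsupp.induction_linear with
  | zero => simp
  | add f g hf hg => simp [map_add, LinearMap.add_apply, hf, hg]
  | single y c => rw [mulL_single_single]; simp [base_one_right, Finsupp.smul_single]

end Stmt13


/-- The free ℤ-module on `D_{2m} ∪ {X, Y}` (`m = 2n+1`), with multiplication
determined by the group law on `D_{2m}`, `hX = Xh = X`, `hY = Yh = Y` for `h` in the
rotation subgroup `H`, `gX = Xg = Y`, `gY = Yg = X` for reflections `g`,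
`X² = Y² = Σ_{h∈H} h` and `XY = YX = Σ_{g∉H} g`, is an associative unital ring with
unit the identity of `D_{2m}`.  Here `X, Y` are encoded as `Sum.inr false`,
`Sum.inr true`. -/
theorem stmt_13 (n : ℕ) (hn : 1 ≤ n) :
    ∃ mul : ((DihedralGroup (2 * n + 1)) ⊕ Bool →₀ ℤ) →
        ((DihedralGroup (2 * n + 1)) ⊕ Bool →₀ ℤ) →
        ((DihedralGroup (2 * n + 1)) ⊕ Bool →₀ ℤ),
      -- biadditivity
      (∀ a a' c, mul (a + a') c = mul a c + mul a' c) ∧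
      (∀ a c c', mul a (c + c') = mul a c + mul a c') ∧
      -- associativity
      (∀ a b c, mul (mul a b) c = mul a (mul b c)) ∧
      -- the identity of the dihedral group is a two-sided unit
      (∀ a, mul (Finsupp.single (Sum.inl 1) 1) a = a ∧
            mul a (Finsupp.single (Sum.inl 1) 1) = a) ∧
      -- group multiplication on `D`
      (∀ g h : DihedralGroup (2 * n + 1),
        mul (Finsupp.single (Sum.inl g) 1) (Finsupp.single (Sum.inl h) 1)
          = Finsupp.single (Sum.inl (g * h)) 1) ∧
      -- rotations act trivially on `X` and `Y`
      (∀ (i : ZMod (2 * n + 1)) (c : Bool),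
        mul (Finsupp.single (Sum.inl (DihedralGroup.r i)) 1) (Finsupp.single (Sum.inr c) 1)
          = Finsupp.single (Sum.inr c) 1 ∧
        mul (Finsupp.single (Sum.inr c) 1) (Finsupp.single (Sum.inl (DihedralGroup.r i)) 1)
          = Finsupp.single (Sum.inr c) 1) ∧
      -- reflections interchange `X` and `Y`
      (∀ (i : ZMod (2 * n + 1)) (c : Bool),
        mul (Finsupp.single (Sum.inl (DihedralGroup.sr i)) 1) (Finsupp.single (Sum.inr c) 1)
          = Finsupp.single (Sum.inr (!c)) 1 ∧
        mul (Finsupp.single (Sum.inr c) 1) (Finsupp.single (Sum.inl (DihedralGroup.sr i)) 1)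
          = Finsupp.single (Sum.inr (!c)) 1) ∧
      -- `X² = Y² = Σ_{h ∈ H} h`
      (∀ c : Bool,
        mul (Finsupp.single (Sum.inr c) 1) (Finsupp.single (Sum.inr c) 1)
          = ∑ i : ZMod (2 * n + 1), Finsupp.single (Sum.inl (DihedralGroup.r i)) 1) ∧
      -- `XY = YX = Σ_{g ∉ H} g`
      (∀ c : Bool,
        mul (Finsupp.single (Sum.inr c) 1) (Finsupp.single (Sum.inr (!c)) 1)
          = ∑ i : ZMod (2 * n + 1), Finsupp.single (Sum.inl (DihedralGroup.sr i)) 1) := by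
  
  refine ⟨fun a b => Stmt13.mulL (2 * n + 1) a b, ?_, ?_, ?_, ?_, ?_, ?_, ?_, ?_, ?_⟩
  · intro a a' c; simp [map_add]
  · intro a c c'; simp [map_add]
  · exact Stmt13.mulL_assoc _
  · exact fun a => ⟨Stmt13.mulL_one_left _ a, Stmt13.mulL_one_right _ a⟩
  · intro g h; simp [Stmt13.mulL_single_one, Stmt13.base]
  · intro i c; constructor <;> simp [Stmt13.mulL_single_one, Stmt13.base]
  · intro i c; constructor <;> simp [Stmt13.mulL_single_one, Stmt13.base]
  · intro c; simp [Stmt13.mulL_single_one, Stmt13.base]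
  · intro c; cases c <;> simp [Stmt13.mulL_single_one, Stmt13.base]
end
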